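/- Let X = dU ∈ ℝ^{n×p} with d > 0 and U having orthonormal columns, let X⁽¹⁾ = dU⁽¹⁾ consist of the first p₁ columns (0 < p₁ < p), write U₂ for the remaining p − p₁ columns of U, and let λ, μ > 0. With df(λ) = p₁(2d²/(d²+λ) − d⁴/(d²+λ)²) the degrees of freedom of the ridge fit on X⁽¹⁾ and df(μ) = p(2d²/(d²+μ) − d⁴/(d²+μ)²) that of the ridge fit on X, one has for every y ∈ ℝⁿ the identity RSS(β̂_λ) − RSS(β̂_μ) = (df(μ)/p)·‖U₂ᵀy‖² − (df(λ)/p₁ − df(μ)/p)·‖(U⁽¹⁾)ᵀy‖². Consequently, if df(λ)/p₁ ≥ df(μ)/p, then RSS(β̂_λ) ≥ RSS(β̂_μ) holds if and only if (df(λ)/p₁ − df(μ)/p)·‖(U⁽¹⁾)ᵀy‖² ≤ (df(μ)/p)·‖U₂ᵀy‖². -/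

import Mathlib

open Matrix Finset

/-- RSS of the ridge base-learner with design matrix `Z` and penalty `κ`:
`β̂_κ = (ZᵀZ + κI)⁻¹Zᵀy`, `RSS(β̂_κ) = (y − Zβ̂_κ)ᵀ(y − Zβ̂_κ)`. -/
noncomputable def rssGroup {n p : ℕ} (Z : Matrix (Fin n) (Fin p) ℝ) (kap : ℝ)
    (y : Fin n → ℝ) : ℝ :=
  (y - Z *ᵥ (((Zᵀ * Z + kap • 1)⁻¹ * Zᵀ) *ᵥ y)) ⬝ᵥ
    (y - Z *ᵥ (((Zᵀ * Z + kap • 1)⁻¹ * Zᵀ) *ᵥ y))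

lemma rss_eval {n q : ℕ} (Z : Matrix (Fin n) (Fin q) ℝ) (d κ : ℝ) (hd : 0 < d)
    (hκ : 0 < κ) (hZ : Zᵀ * Z = (d ^ 2 : ℝ) • 1) (y : Fin n → ℝ) :
    rssGroup Z κ y = y ⬝ᵥ y -
      (2 * d ^ 2 / (d ^ 2 + κ) - d ^ 4 / (d ^ 2 + κ) ^ 2) *
        (((Zᵀ *ᵥ y) ⬝ᵥ (Zᵀ *ᵥ y)) / d ^ 2) := by
  have hdk : d ^ 2 + κ ≠ 0 := by positivity
  have hd2 : (d : ℝ) ^ 2 ≠ 0 := by positivity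
  have hsum : Zᵀ * Z + κ • 1 = (d ^ 2 + κ) • (1 : Matrix (Fin q) (Fin q) ℝ) := by
    rw [hZ, add_smul]
  have hinv : (Zᵀ * Z + κ • 1)⁻¹ = (d ^ 2 + κ)⁻¹ • (1 : Matrix (Fin q) (Fin q) ℝ) := by
    apply Matrix.inv_eq_right_inv
    rw [hsum, Matrix.smul_mul, Matrix.mul_smul, Matrix.one_mul, smul_smul,
      mul_inv_cancel₀ hdk, one_smul]
  set c : ℝ := (d ^ 2 + κ)⁻¹ with hc
  set v : Fin q → ℝ := Zᵀ *ᵥ y with hv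
  have hfit : ((Zᵀ * Z + κ • 1)⁻¹ * Zᵀ) *ᵥ y = c • v := by
    rw [hinv, Matrix.smul_mul, Matrix.one_mul, Matrix.smul_mulVec]
  have h1 : y ⬝ᵥ (Z *ᵥ v) = v ⬝ᵥ v := by
    rw [Matrix.dotProduct_mulVec, ← Matrix.mulVec_transpose]
  have h2 : (Z *ᵥ v) ⬝ᵥ y = v ⬝ᵥ v := by rw [dotProduct_comm, h1]
  have h3 : (Z *ᵥ v) ⬝ᵥ (Z *ᵥ v) = d ^ 2 * (v ⬝ᵥ v) := by
    rw [Matrix.dotProduct_mulVec, ← Matrix.mulVec_transpose, Matrix.mulVec_mulVec, hZ,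
      Matrix.smul_mulVec, Matrix.one_mulVec, smul_dotProduct, smul_eq_mul]
  rw [rssGroup, hfit, Matrix.mulVec_smul]
  rw [sub_dotProduct, dotProduct_sub, dotProduct_sub,
    smul_dotProduct, smul_dotProduct, dotProduct_smul,
    dotProduct_smul, smul_eq_mul, smul_eq_mul, smul_eq_mul, h1, h2, h3]
  rw [hc]
  field_simp
  linear_combination (d ^ 2 * (v ⬝ᵥ v)) * (mul_inv_cancel₀ hdk)

/-- For a scaled orthogonal design `X = dU` and its sub-design `X⁽¹⁾ = dU⁽¹⁾` of the first
`p₁` columns, with penalties `λ, μ > 0` and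
`df(λ) = p₁(2d²/(d²+λ) − d⁴/(d²+λ)²)`, `df(μ) = p(2d²/(d²+μ) − d⁴/(d²+μ)²)`, one has
`RSS(β̂_λ) − RSS(β̂_μ) = (df(μ)/p)·‖U₂ᵀy‖² − (df(λ)/p₁ − df(μ)/p)·‖(U⁽¹⁾)ᵀy‖²`;
consequently, if `df(λ)/p₁ ≥ df(μ)/p`, then `RSS(β̂_λ) ≥ RSS(β̂_μ)` iff
`(df(λ)/p₁ − df(μ)/p)·‖(U⁽¹⁾)ᵀy‖² ≤ (df(μ)/p)·‖U₂ᵀy‖²`. -/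
theorem rss_difference_scaled_orthogonal {n p p₁ : ℕ} (hp1 : 0 < p₁) (hpp : p₁ < p)
    (d : ℝ) (hd : 0 < d)
    (U : Matrix (Fin n) (Fin p) ℝ) (hU : Uᵀ * U = 1)
    (lam mu : ℝ) (hlam : 0 < lam) (hmu : 0 < mu)
    (X : Matrix (Fin n) (Fin p) ℝ) (hX : X = d • U)
    (X1 : Matrix (Fin n) (Fin p₁) ℝ)
    (hX1 : X1 = X.submatrix id (Fin.castLE hpp.le))
    (y : Fin n → ℝ)
    (dfl dfm : ℝ)
    (hdfl : dfl = p₁ * (2 * d ^ 2 / (d ^ 2 + lam) - d ^ 4 / (d ^ 2 + lam) ^ 2))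
    (hdfm : dfm = p * (2 * d ^ 2 / (d ^ 2 + mu) - d ^ 4 / (d ^ 2 + mu) ^ 2))
    (A B : ℝ)
    (hA : A = ∑ j : Fin p₁, ((fun i => U i (Fin.castLE hpp.le j)) ⬝ᵥ y) ^ 2)
    (hB : B = ∑ j ∈ Finset.univ.filter (fun j : Fin p => p₁ ≤ (j : ℕ)),
      ((fun i => U i j) ⬝ᵥ y) ^ 2) :
    rssGroup X1 lam y - rssGroup X mu y = (dfm / p) * B - (dfl / p₁ - dfm / p) * A ∧
      (dfm / p ≤ dfl / p₁ →
        (rssGroup X mu y ≤ rssGroup X1 lam y ↔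
          (dfl / p₁ - dfm / p) * A ≤ (dfm / p) * B)) := by
  classical
  have hd2 : (d : ℝ) ^ 2 ≠ 0 := by positivity
  set e : Fin p₁ → Fin p := Fin.castLE hpp.le with he
  -- orthogonality of full design
  have hXZ : Xᵀ * X = (d ^ 2 : ℝ) • 1 := by
    rw [hX, Matrix.transpose_smul, Matrix.smul_mul, Matrix.mul_smul, hU, smul_smul, sq]
  -- orthogonality of sub-design
  have hUsub : (U.submatrix id e)ᵀ * U.submatrix id e = 1 := by
    ext j k
    have h := congrFun (congrFun hU (e j)) (e k)
    simp only [Matrix.mul_apply, Matrix.transpose_apply, Matrix.one_apply,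
      Matrix.submatrix_apply, id] at h ⊢
    rw [h, he]
    simp [Fin.castLE_inj]
  have hX1e : X1 = d • U.submatrix id e := by
    rw [hX1, hX]; ext i j; simp
  have hX1Z : X1ᵀ * X1 = (d ^ 2 : ℝ) • 1 := by
    rw [hX1e, Matrix.transpose_smul, Matrix.smul_mul, Matrix.mul_smul, hUsub, smul_smul, sq]
  -- column dot products
  have hcol1 : ∀ j, (X1ᵀ *ᵥ y) j = d * ((fun i => U i (e j)) ⬝ᵥ y) := by
    intro j
    simp [Matrix.mulVec, dotProduct, hX1e, Finset.mul_sum, mul_assoc]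
  have hcol : ∀ j, (Xᵀ *ᵥ y) j = d * ((fun i => U i j) ⬝ᵥ y) := by
    intro j
    simp [Matrix.mulVec, dotProduct, hX, Finset.mul_sum, mul_assoc]
  have hsA : (X1ᵀ *ᵥ y) ⬝ᵥ (X1ᵀ *ᵥ y) = d ^ 2 * A := by
    rw [hA, Finset.mul_sum]
    simp only [dotProduct, hcol1]
    exact Finset.sum_congr rfl fun j _ => by ring
  -- splitting the full sum
  have hmap : (Finset.univ.filter fun j : Fin p => (j : ℕ) < p₁) =
      Finset.univ.map (Fin.castLEEmb hpp.le) := by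
    ext k
    simp only [Finset.mem_filter, Finset.mem_map, Finset.mem_univ, true_and]
    constructor
    · intro hk
      exact ⟨⟨(k : ℕ), hk⟩, by simp [Fin.ext_iff]⟩
    · rintro ⟨j, -, rfl⟩
      simpa using j.isLt
  have hsS : (Xᵀ *ᵥ y) ⬝ᵥ (Xᵀ *ᵥ y) = d ^ 2 * (A + B) := by
    have hsplit : ∑ j : Fin p, ((fun i => U i j) ⬝ᵥ y) ^ 2 = A + B := by
      rw [← Finset.sum_filter_add_sum_filter_not Finset.univ
        (fun j : Fin p => (j : ℕ) < p₁) (fun j => ((fun i => U i j) ⬝ᵥ y) ^ 2)]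
      congr 1
      · rw [hmap, Finset.sum_map, hA]
        rfl
      · rw [hB]
        congr 1
        ext j
        simp [not_lt]
    rw [← hsplit, Finset.mul_sum]
    simp only [dotProduct, hcol]
    exact Finset.sum_congr rfl fun j _ => by ring
  -- evaluate RSS
  have r1 : rssGroup X1 lam y = y ⬝ᵥ y -
      (2 * d ^ 2 / (d ^ 2 + lam) - d ^ 4 / (d ^ 2 + lam) ^ 2) * A := by
    rw [rss_eval X1 d lam hd hlam hX1Z y, hsA, mul_div_cancel_left₀ _ hd2]
  have r2 : rssGroup X mu y = y ⬝ᵥ y -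
      (2 * d ^ 2 / (d ^ 2 + mu) - d ^ 4 / (d ^ 2 + mu) ^ 2) * (A + B) := by
    rw [rss_eval X d mu hd hmu hXZ y, hsS, mul_div_cancel_left₀ _ hd2]
  have hp1' : (p₁ : ℝ) ≠ 0 := Nat.cast_ne_zero.mpr hp1.ne'
  have hp' : (p : ℝ) ≠ 0 := Nat.cast_ne_zero.mpr (hp1.trans hpp).ne'
  have hgl : dfl / p₁ = 2 * d ^ 2 / (d ^ 2 + lam) - d ^ 4 / (d ^ 2 + lam) ^ 2 := by
    rw [hdfl]; field_simp
  have hgm : dfm / p = 2 * d ^ 2 / (d ^ 2 + mu) - d ^ 4 / (d ^ 2 + mu) ^ 2 := by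
    rw [hdfm]; field_simp
  have key : rssGroup X1 lam y - rssGroup X mu y =
      (dfm / p) * B - (dfl / p₁ - dfm / p) * A := by
    rw [r1, r2, hgl, hgm]; ring
  exact ⟨key, fun _ => ⟨fun h => by linarith, fun h => by linarith⟩⟩
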